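/- Let R be a commutative ring and M a free R-module of rank 2, and let m : M × M → R be an alternating bilinear form (so m(v, v) = 0 for all v ∈ M). Then m is nondegenerate, i.e. the induced linear map M → Hom_R(M, R) sending x to m(x, −) is bijective, if and only if the induced linear map ⋀²M → R determined by x ∧ y ↦ m(x, y) is bijective. -/

import Mathlib

open ExteriorAlgebra

section aux

variable {R M : Type*} [CommRing R] [AddCommGroup M] [Module R M]

lemma iota_swap (x y : M) : ι R y * ι R x = - (ι R x * ι R y) := by
  have h := ι_sq_zero (R := R) (x + y)
  rw [map_add, add_mul, mul_add, mul_add, ι_sq_zero, ι_sq_zero, zero_add, add_zero] at h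
  exact eq_neg_of_add_eq_zero_left (by linear_combination (norm := abel) h)

lemma iMulti_two (x y : M) : ιMulti R 2 ![x, y] = ι R x * ι R y := by
  simp [ιMulti_apply, List.ofFn_succ]

lemma wedge_expand (b : Module.Basis (Fin 2) R M) (x y : M) :
    ι R x * ι R y = (b.repr x 0 * b.repr y 1 - b.repr x 1 * b.repr y 0) •
      (ι R (b 0) * ι R (b 1)) := by
  have hx : x = b.repr x 0 • b 0 + b.repr x 1 • b 1 := by
    have := b.sum_repr x
    rw [Fin.sum_univ_two] at this
    exact this.symm
  have hy : y = b.repr y 0 • b 0 + b.repr y 1 • b 1 := by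
    have := b.sum_repr y
    rw [Fin.sum_univ_two] at this
    exact this.symm
  nth_rewrite 1 [hx, hy]
  rw [map_add, map_add, map_smul, map_smul, map_smul, map_smul]
  rw [add_mul, mul_add, mul_add, smul_mul_smul_comm, smul_mul_smul_comm,
    smul_mul_smul_comm, smul_mul_smul_comm, ι_sq_zero, ι_sq_zero,
    iota_swap (b 0) (b 1)]
  rw [sub_smul]
  module

end aux
/-- For a free module `M` of rank 2 with an alternating bilinear form `m`, the form `m` is
nondegenerate (i.e. `x ↦ m x` is bijective) iff the induced linear map `⋀²M → R`
determined by `x ∧ y ↦ m x y` is bijective. -/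
theorem stmt3 {R M : Type*} [CommRing R] [AddCommGroup M] [Module R M]
    (b : Module.Basis (Fin 2) R M)
    (m : M →ₗ[R] M →ₗ[R] R) (hm : ∀ v : M, m v v = 0)
    (g : ⋀[R]^2 M →ₗ[R] R)
    (hg : ∀ x y : M, g ⟨ExteriorAlgebra.ιMulti R 2 ![x, y],
        ExteriorAlgebra.ιMulti_range R 2 (Set.mem_range_self _)⟩ = m x y) :
    Function.Bijective ⇑m ↔ Function.Bijective ⇑g := by
  classical
  set c : R := m (b 0) (b 1) with hc_def
  have hskew : ∀ x y : M, m y x = - m x y := fun x y => by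
    have h := hm (x + y)
    simp only [map_add, LinearMap.add_apply, hm] at h
    linear_combination h
  -- the wedge generator
  set ω : ExteriorAlgebra R M := ι R (b 0) * ι R (b 1) with hω_def
  set Ω : ⋀[R]^2 M := ⟨ExteriorAlgebra.ιMulti R 2 ![b 0, b 1],
      ExteriorAlgebra.ιMulti_range R 2 (Set.mem_range_self _)⟩ with hΩ_def
  have hΩval : (Ω : ExteriorAlgebra R M) = ω := iMulti_two _ _
  have hgΩ : g Ω = c := hg (b 0) (b 1)
  -- every element of the exterior power is a multiple of Ω
  have hspan : ∀ z : ⋀[R]^2 M, ∃ t : R, z = t • Ω := by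
    intro z
    have hz : (z : ExteriorAlgebra R M) ∈
        Submodule.span R (Set.range (ExteriorAlgebra.ιMulti R 2 (M := M))) := by
      rw [ExteriorAlgebra.ιMulti_span_fixedDegree]
      exact z.2
    have key : ∀ u ∈ Submodule.span R (Set.range (ExteriorAlgebra.ιMulti R 2 (M := M))),
        ∃ t : R, u = t • ω := by
      intro u hu
      induction hu using Submodule.span_induction with
      | mem u hu =>
          obtain ⟨v, rfl⟩ := hu
          have hv : v = ![v 0, v 1] := by
            funext i; fin_cases i <;> rfl
          rw [hv, iMulti_two, wedge_expand b]
          exact ⟨_, rfl⟩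
      | zero => exact ⟨0, by simp⟩
      | add u v _ _ hu hv =>
          obtain ⟨t1, h1⟩ := hu
          obtain ⟨t2, h2⟩ := hv
          exact ⟨t1 + t2, by rw [h1, h2, add_smul]⟩
      | smul r u _ hu =>
          obtain ⟨t, h⟩ := hu
          exact ⟨r * t, by rw [h, smul_smul]⟩
    obtain ⟨t, ht⟩ := key _ hz
    exact ⟨t, Subtype.ext (by rw [Submodule.coe_smul, hΩval, ht])⟩
  have hgsmul : ∀ t : R, g (t • Ω) = t * c := fun t => by
    rw [map_smul, hgΩ, smul_eq_mul]
  -- bijectivity of g ↔ IsUnit c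
  have hgiff : Function.Bijective ⇑g ↔ IsUnit c := by
    constructor
    · intro hbij
      obtain ⟨z, hz⟩ := hbij.2 1
      obtain ⟨t, rfl⟩ := hspan z
      rw [hgsmul] at hz
      exact IsUnit.of_mul_eq_one (a := c) t (by rw [mul_comm]; exact hz)
    · intro hc
      constructor
      · intro z1 z2 h12
        obtain ⟨t1, rfl⟩ := hspan z1
        obtain ⟨t2, rfl⟩ := hspan z2
        rw [hgsmul, hgsmul] at h12
        have ht : t1 = t2 := by
          have h12' : c * t1 = c * t2 := by rw [mul_comm c t1, mul_comm c t2]; exact h12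
          exact hc.mul_left_cancel h12'
        rw [ht]
      · intro r
        refine ⟨(r * ↑hc.unit⁻¹) • Ω, ?_⟩
        rw [hgsmul, mul_assoc, IsUnit.val_inv_mul, mul_one]
  -- bijectivity of m ↔ IsUnit c, via the matrix of m
  set A : Matrix (Fin 2) (Fin 2) R := LinearMap.toMatrix b b.dualBasis m with hA_def
  have hA : ∀ i j, A i j = m (b j) (b i) := fun i j => by
    rw [hA_def, LinearMap.toMatrix_apply, Module.Basis.dualBasis_repr]
  have hdet : A.det = c * c := by
    rw [Matrix.det_fin_two, hA, hA, hA, hA, hm, hm, hskew (b 0) (b 1)]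
    ring
  have hmiff : Function.Bijective ⇑m ↔ IsUnit c := by
    constructor
    · intro hbij
      have hco : ((LinearEquiv.ofBijective m hbij : M ≃ₗ[R] Module.Dual R M) :
          M →ₗ[R] Module.Dual R M) = m := rfl
      have hAdet : IsUnit A.det := by
        rw [hA_def, ← hco]
        exact (LinearEquiv.ofBijective m hbij).isUnit_det b b.dualBasis
      rw [hdet] at hAdet
      exact isUnit_of_mul_isUnit_left hAdet
    · intro hc
      have hAdet : IsUnit A.det := by rw [hdet]; exact hc.mul hc
      rw [← LinearEquiv.coe_ofIsUnitDet hAdet]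
      exact (LinearEquiv.ofIsUnitDet hAdet).bijective
  rw [hmiff, hgiff]
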